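/- Let E be a compact convex subset of a finite-dimensional real inner product space V, let F ⊆ E be an exposed face, and let G be a compact subgroup of the orthogonal group O(V) preserving both E and F. Then the cone C_F = { u ∈ V : F = F_u(E) } contains a G-fixed vector. -/

import Mathlib

open RealInnerProductSpace

/-- The exposed face of `E` defined by `u`:
`F_u(E) = { x ∈ E : ⟨x,u⟩ = max_{y ∈ E} ⟨y,u⟩ }`. -/
def exposedFaceOf {V : Type*} [NormedAddCommGroup V] [InnerProductSpace ℝ V]
    (E : Set V) (u : V) : Set V :=
  {x ∈ E | ∀ y ∈ E, ⟪y, u⟫ ≤ ⟪x, u⟫}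

/-- In a finite-dimensional real normed space, the convex hull of a compact set is
compact. -/
theorem isCompact_convexHull_of_isCompact {V : Type*} [NormedAddCommGroup V]
    [NormedSpace ℝ V] [FiniteDimensional ℝ V] {s : Set V} (hs : IsCompact s) :
    IsCompact (convexHull ℝ s) := by
  classical
  rcases s.eq_empty_or_nonempty with rfl | ⟨x₀, hx₀⟩
  · simpa [convexHull_empty] using isCompact_empty
  set n := Module.finrank ℝ V + 1 with hn
  set D : Set ((Fin n → ℝ) × (Fin n → V)) :=
    (stdSimplex ℝ (Fin n)) ×ˢ (Set.univ.pi fun _ => s) with hD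
  have hDcomp : IsCompact D :=
    (isCompact_stdSimplex (𝕜 := ℝ) (ι := Fin n)).prod (isCompact_univ_pi fun _ => hs)
  set f : (Fin n → ℝ) × (Fin n → V) → V := fun p => ∑ i, p.1 i • p.2 i with hfdef
  have hfcont : Continuous f := by
    apply continuous_finset_sum
    intro i _
    exact ((continuous_apply i).comp continuous_fst).smul
      ((continuous_apply i).comp continuous_snd)
  have himage : f '' D = convexHull ℝ s := by
    apply Set.Subset.antisymm
    · rintro _ ⟨⟨w, z⟩, ⟨⟨hw0, hw1⟩, hzs⟩, rfl⟩
      exact (convex_convexHull ℝ s).sum_mem (fun i _ => hw0 i) hw1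
        (fun i _ => subset_convexHull ℝ s (hzs i (Set.mem_univ i)))
    · intro x hx
      obtain ⟨ι, hfin, z, w, hzs, hindep, hwpos, hwsum, hsum⟩ :=
        eq_pos_convex_span_of_mem_convexHull hx
      letI := hfin
      have hcard : Fintype.card ι ≤ n := by
        refine le_trans hindep.card_le_finrank_succ ?_
        exact Nat.add_le_add_right (Submodule.finrank_le _) 1
      obtain ⟨e⟩ : Nonempty (ι ↪ Fin n) :=
        Function.Embedding.nonempty_of_card_le (by simpa using hcard)
      set w' : Fin n → ℝ := Function.extend e w (fun _ => (0 : ℝ)) with hw'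
      set z' : Fin n → V := Function.extend e z (fun _ => x₀) with hz'
      have hwe : ∀ i, w' (e i) = w i := fun i => e.injective.extend_apply w _ i
      have hze : ∀ i, z' (e i) = z i := fun i => e.injective.extend_apply z _ i
      have hwout : ∀ j : Fin n, j ∉ Finset.univ.map e → w' j = 0 := by
        intro j hj
        have hne : ¬∃ i, e i = j := by simpa [Finset.mem_map] using hj
        rw [hw', Function.extend_apply' w _ j hne]
      have hnn : ∀ j, 0 ≤ w' j := by
        intro j
        by_cases hj : j ∈ Finset.univ.map e
        · obtain ⟨i, -, rfl⟩ := Finset.mem_map.mp hj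
          rw [hwe]
          exact (hwpos i).le
        · rw [hwout j hj]
      have hsum1 : ∑ j, w' j = 1 := by
        rw [← Finset.sum_subset (Finset.subset_univ (Finset.univ.map e))
          (fun j _ hj => hwout j hj), Finset.sum_map, ← hwsum]
        exact Finset.sum_congr rfl fun i _ => hwe i
      have hzmem : ∀ j, z' j ∈ s := by
        intro j
        by_cases hj : ∃ i, e i = j
        · obtain ⟨i, rfl⟩ := hj
          rw [hze]
          exact hzs ⟨i, rfl⟩
        · rw [hz', Function.extend_apply' z _ j hj]
          exact hx₀
      have hfsum : ∑ j, w' j • z' j = x := by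
        rw [← Finset.sum_subset (Finset.subset_univ (Finset.univ.map e))
          (fun j _ hj => by rw [hwout j hj, zero_smul]), Finset.sum_map, ← hsum]
        exact Finset.sum_congr rfl fun i _ => by rw [hwe, hze]
      exact ⟨(w', z'), ⟨⟨hnn, hsum1⟩, fun j _ => hzmem j⟩, hfsum⟩
  rw [← himage]
  exact hDcomp.image hfcont


/-- If `F` is an exposed face of a compact convex set `E` in a finite-dimensional real
inner product space and a compact group `G` acts orthogonally on `V` preserving `E` and
`F`, then the cone `C_F = { u : F = F_u(E) }` contains a `G`-fixed vector. -/
theorem stmt_4 {G V : Type*} [Group G] [TopologicalSpace G] [IsTopologicalGroup G]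
    [CompactSpace G]
    [NormedAddCommGroup V] [InnerProductSpace ℝ V] [FiniteDimensional ℝ V]
    (ρ : G →* (V ≃ₗᵢ[ℝ] V)) (hρ : ∀ v : V, Continuous fun g => ρ g v)
    (E F : Set V) (hEcomp : IsCompact E) (hEconv : Convex ℝ E)
    (hFexp : ∃ u : V, u ≠ 0 ∧ F = exposedFaceOf E u)
    (hE : ∀ g : G, ρ g '' E = E) (hF : ∀ g : G, ρ g '' F = F) :
    ∃ u : V, F = exposedFaceOf E u ∧ ∀ g : G, ρ g u = u := by
  classical
  obtain ⟨u, -, hFu⟩ := hFexp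
  by_cases hEne : E.Nonempty
  swap
  · rw [Set.not_nonempty_iff_eq_empty] at hEne
    subst hEne
    refine ⟨0, ?_, fun g => (ρ g).map_zero⟩
    rw [hFu]
    ext x
    simp [exposedFaceOf]
  -- E is nonempty; pick a point of F
  obtain ⟨x₀, hx₀F⟩ : F.Nonempty := by
    rw [hFu]
    have hcont : ContinuousOn (fun y : V => ⟪y, u⟫) E :=
      (continuous_id.inner continuous_const).continuousOn
    obtain ⟨x, hxE, hx⟩ := hEcomp.exists_isMaxOn hEne hcont
    exact ⟨x, hxE, fun y hy => hx hy⟩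
  -- image of an exposed face under a group element
  have himg : ∀ (g : G) (w : V), ρ g '' exposedFaceOf E w = exposedFaceOf E (ρ g w) := by
    intro g w
    ext x
    constructor
    · rintro ⟨x', ⟨hx'E, hx'max⟩, rfl⟩
      refine ⟨by rw [← hE g]; exact Set.mem_image_of_mem _ hx'E, fun y hy => ?_⟩
      rw [← hE g] at hy
      obtain ⟨y', hy'E, rfl⟩ := hy
      rw [(ρ g).inner_map_map, (ρ g).inner_map_map]
      exact hx'max y' hy'E
    · rintro ⟨hxE, hxmax⟩
      rw [← hE g] at hxE
      obtain ⟨x', hx'E, rfl⟩ := hxE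
      refine ⟨x', ⟨hx'E, fun y hy => ?_⟩, rfl⟩
      have h := hxmax (ρ g y) (by rw [← hE g]; exact Set.mem_image_of_mem _ hy)
      rwa [(ρ g).inner_map_map, (ρ g).inner_map_map] at h
  set C : Set V := {w | F = exposedFaceOf E w} with hCdef
  have horbC : ∀ g : G, ρ g u ∈ C := by
    intro g
    show F = _
    rw [← himg g u, ← hFu, hF g]
  have hCconv : Convex ℝ C := by
    intro w₁ hw₁ w₂ hw₂ a b ha hb hab
    have hw₁' : F = exposedFaceOf E w₁ := hw₁
    have hw₂' : F = exposedFaceOf E w₂ := hw₂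
    show F = exposedFaceOf E (a • w₁ + b • w₂)
    ext x
    constructor
    · intro hxF
      have h1 : x ∈ exposedFaceOf E w₁ := hw₁' ▸ hxF
      have h2 : x ∈ exposedFaceOf E w₂ := hw₂' ▸ hxF
      refine ⟨h1.1, fun y hy => ?_⟩
      have e1 := h1.2 y hy
      have e2 := h2.2 y hy
      simp only [inner_add_right, real_inner_smul_right]
      nlinarith
    · rintro ⟨hxE, hxmax⟩
      have hx₀1 : x₀ ∈ exposedFaceOf E w₁ := hw₁' ▸ hx₀F
      have hx₀2 : x₀ ∈ exposedFaceOf E w₂ := hw₂' ▸ hx₀F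
      have hc := hxmax x₀ hx₀1.1
      simp only [inner_add_right, real_inner_smul_right] at hc
      have e1 : ⟪x, w₁⟫ ≤ ⟪x₀, w₁⟫ := hx₀1.2 x hxE
      have e2 : ⟪x, w₂⟫ ≤ ⟪x₀, w₂⟫ := hx₀2.2 x hxE
      rcases eq_or_lt_of_le ha with ha0 | ha0
      · -- a = 0, so b = 1 and the functional is w₂
        have heq : ⟪x₀, w₂⟫ = ⟪x, w₂⟫ := by nlinarith
        rw [hw₂']
        exact ⟨hxE, fun y hy => (hx₀2.2 y hy).trans heq.le⟩
      · have heq : ⟪x₀, w₁⟫ = ⟪x, w₁⟫ := by nlinarith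
        rw [hw₁']
        exact ⟨hxE, fun y hy => (hx₀1.2 y hy).trans heq.le⟩
  -- the orbit and its convex hull
  set K : Set V := convexHull ℝ (Set.range fun g : G => ρ g u) with hKdef
  have hKcomp : IsCompact K := isCompact_convexHull_of_isCompact (isCompact_range (hρ u))
  have hKconv : Convex ℝ K := convex_convexHull _ _
  have hKne : K.Nonempty := ⟨u, subset_convexHull _ _ ⟨1, by simp⟩⟩
  have hKC : K ⊆ C := convexHull_min (by rintro _ ⟨g, rfl⟩; exact horbC g) hCconv
  have hKinv : ∀ (g : G), ∀ w ∈ K, ρ g w ∈ K := by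
    intro g w hw
    have hpre : Convex ℝ ((fun x => ρ g x) ⁻¹' K) :=
      hKconv.linear_preimage ((ρ g).toLinearEquiv : V →ₗ[ℝ] V)
    have hsub : K ⊆ (fun x => ρ g x) ⁻¹' K := by
      refine convexHull_min ?_ hpre
      rintro _ ⟨g', rfl⟩
      simp only [Set.mem_preimage]
      have hmul : ρ g ((ρ g') u) = ρ (g * g') u := by rw [map_mul]; rfl
      rw [hmul]
      exact subset_convexHull _ _ ⟨g * g', rfl⟩
    exact hsub hw
  -- minimal norm point of K
  obtain ⟨v, hvK, hvmin⟩ := hKcomp.exists_isMinOn hKne continuous_norm.continuousOn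
  refine ⟨v, hKC hvK, fun g => ?_⟩
  set w := ρ g v with hw
  have hwK : w ∈ K := hKinv g v hvK
  have hnw : ‖w‖ = ‖v‖ := (ρ g).norm_map v
  have hm : (1/2 : ℝ) • v + (1/2 : ℝ) • w ∈ K :=
    hKconv hvK hwK (by norm_num) (by norm_num) (by norm_num)
  have h1 : ‖v‖ ≤ ‖(1/2 : ℝ) • v + (1/2 : ℝ) • w‖ := hvmin hm
  have h2 : ‖(1/2 : ℝ) • v + (1/2 : ℝ) • w‖ = ‖v + w‖ / 2 := by
    rw [← smul_add, norm_smul]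
    simp [abs_of_nonneg]
    ring
  have hpar := parallelogram_law_with_norm ℝ v w
  have hvw : ‖v - w‖ = 0 := by
    have h3 : ‖v‖ ≤ ‖v + w‖ / 2 := h2 ▸ h1
    nlinarith [norm_nonneg (v - w), norm_nonneg (v + w), norm_nonneg v]
  have := sub_eq_zero.mp (norm_eq_zero.mp hvw)
  exact this.symm
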